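/- If there exists a 1-subset-regular self-complementary 3-uniform hypergraph on n vertices (with n ≥ 3), then n ≡ 1 (mod 4) or n ≡ 2 (mod 4). -/

import Mathlib

private lemma aux_mod (n lam : ℕ) (hn : 3 ≤ n) (h : (n-1)*(n-2) = 4*lam) :
    n % 4 = 1 ∨ n % 4 = 2 := by
  obtain ⟨m, rfl⟩ : ∃ m, n = m + 3 := ⟨n - 3, by omega⟩
  have h' : (m+2)*(m+1) = 4*lam := by
    have : m + 3 - 1 = m + 2 := by omega
    have h2 : m + 3 - 2 = m + 1 := by omega
    rw [this, h2] at h; exact h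
  have hmod : ((m+2)*(m+1)) % 4 = 0 := by omega
  rw [Nat.mul_mod, Nat.add_mod m 2, Nat.add_mod m 1] at hmod
  have hlt : m % 4 < 4 := Nat.mod_lt _ (by norm_num)
  interval_cases hm : m % 4 <;> simp_all <;> omega

/-- If there exists a 1-subset-regular self-complementary 3-uniform hypergraph
on `n` vertices (with `n ≥ 3`), then `n ≡ 1 (mod 4)` or `n ≡ 2 (mod 4)`. -/
theorem mod_four_of_one_subset_regular_self_complementary (n : ℕ) (hn : 3 ≤ n)
    (h : ∃ E : Finset (Finset (Fin n)),
      (∀ e ∈ E, e.card = 3) ∧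
      (∃ τ : Equiv.Perm (Fin n), ∀ e : Finset (Fin n), e.card = 3 →
        (e ∈ E ↔ e.image τ ∉ E)) ∧
      (∃ lam : ℕ, ∀ s : Finset (Fin n), s.card = 1 →
        (E.filter (fun e => s ⊆ e)).card = lam)) :
    n % 4 = 1 ∨ n % 4 = 2 := by
  obtain ⟨E, hE3, ⟨τ, hτ⟩, lam, hlam⟩ := h
  set S : Fin n → Finset (Finset (Fin n)) :=
    fun w => (Finset.univ.powersetCard 3).filter (fun e => w ∈ e) with hS
  -- cardinality of S w
  have hScard : ∀ w : Fin n, (S w).card = (n-1).choose 2 := by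
    intro w
    show (((Finset.univ : Finset (Fin n)).powersetCard 3).filter (fun e => w ∈ e)).card
      = (n-1).choose 2
    have hnot : ((Finset.univ : Finset (Fin n)).powersetCard 3).filter (fun e => w ∉ e)
        = (Finset.univ.erase w).powersetCard 3 := by
      ext e
      simp [Finset.mem_powersetCard, Finset.subset_erase, and_comm]
    have hsum := Finset.card_filter_add_card_filter_not
      (s := (Finset.univ : Finset (Fin n)).powersetCard 3) (p := fun e => w ∈ e)
    rw [hnot] at hsum
    have h1 : ((Finset.univ : Finset (Fin n)).powersetCard 3).card = n.choose 3 := by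
      simp [Finset.card_powersetCard]
    have h2 : ((Finset.univ.erase w).powersetCard 3).card = (n-1).choose 3 := by
      simp [Finset.card_powersetCard, Finset.card_erase_of_mem]
    have hpascal : n.choose 3 = (n-1).choose 2 + (n-1).choose 3 := by
      obtain ⟨m, rfl⟩ : ∃ m, n = m + 1 := ⟨n - 1, by omega⟩
      simp [Nat.choose_succ_succ]
    rw [h1, h2] at hsum
    omega
  -- lam equals the degree of each vertex
  have hdeg : ∀ w : Fin n, ((S w).filter (· ∈ E)).card = lam := by
    intro w
    rw [← hlam {w} (by simp)]
    congr 1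
    ext e
    simp only [hS, Finset.mem_filter, Finset.mem_powersetCard,
      Finset.singleton_subset_iff]
    constructor
    · rintro ⟨⟨-, hw⟩, he⟩
      exact ⟨he, hw⟩
    · rintro ⟨he, hw⟩
      exact ⟨⟨⟨Finset.subset_univ _, hE3 e he⟩, hw⟩, he⟩
  -- bijection argument
  have hv : (0 : ℕ) < n := by omega
  set v : Fin n := ⟨0, hv⟩
  have hinj : Function.Injective τ := τ.injective
  have hbij : ((S v).filter (· ∈ E)).card = ((S (τ v)).filter (· ∉ E)).card := by
    apply Finset.card_bij (fun e _ => e.image τ)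
    · intro e he
      simp only [hS, Finset.mem_filter, Finset.mem_powersetCard] at he ⊢
      obtain ⟨⟨⟨-, hc⟩, hmem⟩, heE⟩ := he
      refine ⟨⟨⟨Finset.subset_univ _, ?_⟩, ?_⟩, ?_⟩
      · rw [Finset.card_image_of_injective _ hinj]; exact hc
      · exact Finset.mem_image_of_mem _ hmem
      · exact (hτ e hc).mp heE
    · intro a ha b hb hab
      exact Finset.image_injective hinj hab
    · intro f hf
      simp only [hS, Finset.mem_filter, Finset.mem_powersetCard] at hf
      obtain ⟨⟨⟨-, hc⟩, hmem⟩, hfE⟩ := hf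
      refine ⟨f.image τ.symm, ?_, ?_⟩
      · simp only [hS, Finset.mem_filter, Finset.mem_powersetCard]
        have hc' : (f.image τ.symm).card = 3 := by
          rw [Finset.card_image_of_injective _ τ.symm.injective]; exact hc
        have himg : (f.image τ.symm).image τ = f := by
          rw [Finset.image_image]
          simp
        refine ⟨⟨⟨Finset.subset_univ _, hc'⟩, ?_⟩, ?_⟩
        · have : τ.symm (τ v) = v := τ.symm_apply_apply v
          rw [← this]
          exact Finset.mem_image_of_mem _ hmem
        · rw [hτ _ hc', himg]
          exact hfE
      · rw [Finset.image_image]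
        simp
  -- combine
  have hsplit := Finset.card_filter_add_card_filter_not
    (s := S (τ v)) (p := fun e => e ∈ E)
  have h1 : ((S (τ v)).filter (· ∈ E)).card = lam := hdeg _
  have h2 : ((S v).filter (· ∈ E)).card = lam := hdeg _
  have hSc := hScard (τ v)
  have key : 2 * lam = (n-1).choose 2 := by
    simp only [h1] at hsplit
    rw [h2] at hbij
    omega
  -- turn choose into product
  have hchoose : 2 * ((n-1).choose 2) = (n-1) * (n-2) := by
    have := Nat.choose_two_right (n-1)
    rw [this]
    have heven : 2 ∣ (n-1) * (n-1-1) := (Nat.even_mul_pred_self (n-1)).two_dvd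
    rw [Nat.mul_div_cancel' heven]
    have h11 : n - 1 - 1 = n - 2 := by omega
    rw [h11]
  exact aux_mod n lam hn (by omega)
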